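/- Let F0, F1 be CDFs on ℝ with F0(x) ≥ F1(x) for all x, and let G0, G1 be CDFs with G0(x) ≥ G1(x) for all x. If X_i ~ F_i and Y_j ~ G_j are independent, then for any mixing weights arising from a01+a10<1: a00²·F0∗g0 + a01a10·F0∗g1 + a01a00·F1∗g0 + a01a11·F1∗g1 ≥ a10a00·F0∗g0 + a11a10·F0∗g1 + a10a01·F1∗g0 + a11²·F1∗g1 pointwise, where g_j is the density of G_j, a00 = 1−a01, a11 = 1−a10, and F∗g denotes convolution (the CDF of the corresponding independent sum). -/

import Mathlib

open MeasureTheory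

/-- A lower set in ℝ is empty, everything, or squeezed between `Iio b` and `Iic b`. -/
lemma lowerSet_cases (S : Set ℝ) (hS : ∀ t t' : ℝ, t' ≤ t → t ∈ S → t' ∈ S) :
    S = ∅ ∨ S = Set.univ ∨ ∃ b : ℝ, Set.Iio b ⊆ S ∧ S ⊆ Set.Iic b := by
  by_cases hne : S = ∅
  · exact Or.inl hne
  have hne' : S.Nonempty := Set.nonempty_iff_ne_empty.2 hne
  by_cases hb : BddAbove S
  · refine Or.inr (Or.inr ⟨sSup S, ?_, ?_⟩)
    · intro t ht
      obtain ⟨s, hsS, hts⟩ := exists_lt_of_lt_csSup hne' ht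
      exact hS s t hts.le hsS
    · exact fun t ht => le_csSup hb ht
  · refine Or.inr (Or.inl ?_)
    ext t
    simp only [Set.mem_univ, iff_true]
    obtain ⟨s, hsS, hts⟩ := not_bddAbove_iff.1 hb t
    exact hS s t hts.le hsS

lemma S_lower (F : ℝ → ℝ) (hF : Monotone F) (x u : ℝ) :
    ∀ t t' : ℝ, t' ≤ t → t ∈ {t : ℝ | u < F (x - t)} → t' ∈ {t : ℝ | u < F (x - t)} := by
  intro t t' htt' ht
  have : F (x - t) ≤ F (x - t') := hF (by linarith)
  exact lt_of_lt_of_le ht this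

lemma S_measurable (F : ℝ → ℝ) (hF : Monotone F) (x u : ℝ) :
    MeasurableSet {t : ℝ | u < F (x - t)} := by
  rcases lowerSet_cases _ (S_lower F hF x u) with h | h | ⟨b, h1, h2⟩
  · rw [h]; exact MeasurableSet.empty
  · rw [h]; exact MeasurableSet.univ
  · by_cases hbS : b ∈ {t : ℝ | u < F (x - t)}
    · have : {t : ℝ | u < F (x - t)} = Set.Iic b := by
        refine subset_antisymm h2 fun t ht => ?_
        rcases lt_or_eq_of_le (Set.mem_Iic.1 ht) with h' | h'
        · exact h1 h'
        · show u < F (x - t)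
          rw [h']
          exact hbS
      rw [this]; exact measurableSet_Iic
    · have : {t : ℝ | u < F (x - t)} = Set.Iio b := by
        refine subset_antisymm (fun t ht => ?_) h1
        have hle : t ≤ b := h2 ht
        have hne : t ≠ b := fun e => hbS (by rw [← e]; exact ht)
        exact lt_of_le_of_ne hle hne
      rw [this]; exact measurableSet_Iio

/-- Layer-cake representation of `∫ F(x-t) g(t) dt` for monotone `F` with values in `[0,1]`. -/
lemma layer_rep (F g : ℝ → ℝ) (hF : Monotone F)
    (hFr : ∀ y, F y ∈ Set.Icc (0:ℝ) 1) (hg : ∀ t, 0 ≤ g t) (hgi : Integrable g) (x : ℝ) :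
    ∫ t, F (x - t) * g t =
      ∫ u in Set.Ioo (0:ℝ) 1, ∫ t in {t : ℝ | u < F (x - t)}, g t := by
  set h : ℝ → ℝ := fun t => F (x - t) with hh
  have hanti : Antitone h := fun s t hst => hF (by linarith)
  have hmeas : Measurable h := hanti.measurable
  set ν : Measure ℝ := volume.restrict (Set.Ioo (0:ℝ) 1) with hν
  haveI : IsFiniteMeasure ν := by
    constructor
    rw [hν, Measure.restrict_apply_univ, Real.volume_Ioo]
    norm_num
  set M : Set (ℝ × ℝ) := {p : ℝ × ℝ | p.2 < h p.1} with hM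
  have hMmeas : MeasurableSet M :=
    measurableSet_lt measurable_snd (hmeas.comp measurable_fst)
  set f : ℝ × ℝ → ℝ := M.indicator (fun p => g p.1) with hf
  have hfmeas : AEStronglyMeasurable f ((volume : Measure ℝ).prod ν) :=
    (hgi.1.comp_fst).indicator hMmeas
  have hfint : Integrable f ((volume : Measure ℝ).prod ν) := by
    have hb : Integrable (fun z : ℝ × ℝ => g z.1 * (1:ℝ)) ((volume : Measure ℝ).prod ν) :=
      hgi.mul_prod (integrable_const 1)
    refine hb.mono hfmeas (Filter.Eventually.of_forall fun p => ?_)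
    by_cases hpM : p ∈ M
    · simp [hf, Set.indicator_of_mem hpM]
    · simp [hf, Set.indicator_of_notMem hpM]
  -- Step A: pointwise layer-cake for the value h t
  have stepA : ∀ t : ℝ, ∫ u, (Set.Iio (h t)).indicator (fun _ => (1:ℝ)) u ∂ν = h t := by
    intro t
    have h0 : 0 ≤ h t := (hFr (x - t)).1
    have h1 : h t ≤ 1 := (hFr (x - t)).2
    rw [hν, setIntegral_indicator measurableSet_Iio]
    have hset : Set.Ioo (0:ℝ) 1 ∩ Set.Iio (h t) = Set.Ioo 0 (h t) := by
      ext u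
      simp only [Set.mem_inter_iff, Set.mem_Iio, Set.mem_Ioo]
      constructor
      · rintro ⟨⟨ha, _⟩, hb⟩; exact ⟨ha, hb⟩
      · rintro ⟨ha, hb⟩; exact ⟨⟨ha, lt_of_lt_of_le hb h1⟩, hb⟩
    rw [hset, setIntegral_const, measureReal_def, Real.volume_Ioo, smul_eq_mul, mul_one, sub_zero,
      ENNReal.toReal_ofReal h0]
  calc ∫ t, F (x - t) * g t
      = ∫ t, ∫ u, f (t, u) ∂ν := by
        refine integral_congr_ae (Filter.Eventually.of_forall fun t => ?_)
        show F (x - t) * g t = ∫ u, f (t, u) ∂ν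
        have : ∫ u, f (t, u) ∂ν
            = ∫ u, (Set.Iio (h t)).indicator (fun _ => (1:ℝ)) u * g t ∂ν := by
          refine integral_congr_ae (Filter.Eventually.of_forall fun u => ?_)
          by_cases hu : u < h t
          · simp [hf, hM, Set.indicator_of_mem, hu, Set.indicator_apply]
          · simp [hf, hM, Set.indicator_apply, hu]
        rw [this, integral_mul_const, stepA t]
    _ = ∫ u, ∫ t, f (t, u) ∂(volume : Measure ℝ) ∂ν := by
        exact integral_integral_swap (f := fun t u => f (t, u)) (by exact hfint)
    _ = ∫ u in Set.Ioo (0:ℝ) 1, ∫ t in {t : ℝ | u < F (x - t)}, g t := by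
        rw [hν]
        refine integral_congr_ae (Filter.Eventually.of_forall fun u => ?_)
        show ∫ t, f (t, u) = ∫ t in {t : ℝ | u < F (x - t)}, g t
        have : (fun t => f (t, u)) = ({t : ℝ | u < F (x - t)}).indicator g := by
          funext t
          by_cases hu : u < F (x - t)
          · simp [hf, hM, hh, Set.indicator_apply, hu]
          · simp [hf, hM, hh, Set.indicator_apply, hu]
        rw [this, integral_indicator (S_measurable F hF x u)]

/-- Key analytic lemma: if `G0 ≥ G1` pointwise (as CDFs of densities `g0, g1` with total
mass one), then integrating the bounded monotone function `F (x - ·)` against `g0` gives at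
least as much as against `g1`. -/
lemma conv_dom (F g0 g1 : ℝ → ℝ) (hF : Monotone F) (hFr : ∀ y, F y ∈ Set.Icc (0:ℝ) 1)
    (hg0 : ∀ t, 0 ≤ g0 t) (hg1 : ∀ t, 0 ≤ g1 t)
    (hg0i : Integrable g0) (hg1i : Integrable g1)
    (h0 : ∫ t, g0 t = 1) (h1 : ∫ t, g1 t = 1)
    (hdom : ∀ y, ∫ t in Set.Iic y, g1 t ≤ ∫ t in Set.Iic y, g0 t) (x : ℝ) :
    ∫ t, F (x - t) * g1 t ≤ ∫ t, F (x - t) * g0 t := by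
  rw [layer_rep F g0 hF hFr hg0 hg0i x, layer_rep F g1 hF hFr hg1 hg1i x]
  set ν : Measure ℝ := volume.restrict (Set.Ioo (0:ℝ) 1) with hν
  haveI : IsFiniteMeasure ν := by
    constructor
    rw [hν, Measure.restrict_apply_univ, Real.volume_Ioo]
    norm_num
  have hint : ∀ (g : ℝ → ℝ), (∀ t, 0 ≤ g t) → Integrable g → (∫ t, g t = 1) →
      Integrable (fun u => ∫ t in {t : ℝ | u < F (x - t)}, g t) ν := by
    intro g hg hgi hmass
    have hanti : Antitone (fun u => ∫ t in {t : ℝ | u < F (x - t)}, g t) := by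
      intro u v huv
      refine setIntegral_mono_set hgi.integrableOn
        (Filter.Eventually.of_forall fun t => hg t) ?_
      exact Filter.Eventually.of_forall fun t ht => lt_of_le_of_lt huv ht
    refine (integrable_const (1:ℝ)).mono' hanti.measurable.aestronglyMeasurable
      (Filter.Eventually.of_forall fun u => ?_)
    rw [Real.norm_eq_abs, abs_of_nonneg
      (setIntegral_nonneg (S_measurable F hF x u) fun t _ => hg t)]
    calc ∫ t in {t : ℝ | u < F (x - t)}, g t
        ≤ ∫ t, g t := setIntegral_le_integral hgi (Filter.Eventually.of_forall fun t => hg t)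
      _ = 1 := hmass
  refine integral_mono (hint g1 hg1 hg1i h1) (hint g0 hg0 hg0i h0) fun u => ?_
  rcases lowerSet_cases _ (S_lower F hF x u) with h | h | ⟨b, hb1, hb2⟩
  · simp [h]
  · rw [h]
    simp only [Measure.restrict_univ]
    rw [h0, h1]
  · have hae : {t : ℝ | u < F (x - t)} =ᵐ[volume] Set.Iic b := by
      rw [MeasureTheory.ae_eq_set]
      constructor
      · refine measure_mono_null (fun t ht => ?_) (measure_empty)
        exact absurd (hb2 ht.1) ht.2
      · refine measure_mono_null (fun t ht => ?_) (Real.volume_singleton (a := b))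
        have h1' : t ≤ b := ht.1
        have h2' : ¬ t < b := fun hlt => ht.2 (hb1 hlt)
        have : t = b := le_antisymm h1' (not_lt.1 h2')
        exact this
    rw [setIntegral_congr_set hae, setIntegral_congr_set hae]
    exact hdom b

/-- Lemma 4 (key inequality): stochastic dominance of Markov-mixture convolutions.
`F0 ∗ g j` is the CDF of the sum of independent variables with CDF `F0` and density `g j`. -/
theorem mixture_convolution_dominance
    (a01 a10 : ℝ)
    (h01 : a01 ∈ Set.Ioo (0:ℝ) 1) (h10 : a10 ∈ Set.Ioo (0:ℝ) 1)
    (hsum : a01 + a10 < 1)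
    (F0 F1 : ℝ → ℝ) (g0 g1 : ℝ → ℝ)
    (hF0mono : Monotone F0) (hF1mono : Monotone F1)
    (hF0range : ∀ x, F0 x ∈ Set.Icc (0:ℝ) 1) (hF1range : ∀ x, F1 x ∈ Set.Icc (0:ℝ) 1)
    (hg0nn : ∀ t, 0 ≤ g0 t) (hg1nn : ∀ t, 0 ≤ g1 t)
    (hg0int : Integrable g0) (hg1int : Integrable g1)
    (hg0pdf : ∫ t, g0 t = 1) (hg1pdf : ∫ t, g1 t = 1)
    (hFdom : ∀ x, F0 x ≥ F1 x)
    (G0 G1 : ℝ → ℝ)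
    (hG0 : ∀ x, G0 x = ∫ t in Set.Iic x, g0 t)
    (hG1 : ∀ x, G1 x = ∫ t in Set.Iic x, g1 t)
    (hGdom : ∀ x, G0 x ≥ G1 x)
    (conv : (ℝ → ℝ) → (ℝ → ℝ) → ℝ → ℝ)
    (hconv : ∀ F g x, conv F g x = ∫ t, F (x - t) * g t)
    (hint : ∀ (F : ℝ → ℝ) (g : ℝ → ℝ) (x : ℝ),
      (F = F0 ∨ F = F1) → (g = g0 ∨ g = g1) → Integrable fun t => F (x - t) * g t) :
    ∀ x : ℝ,
      (1 - a01) ^ 2 * conv F0 g0 x + a01 * a10 * conv F0 g1 x +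
          a01 * (1 - a01) * conv F1 g0 x + a01 * (1 - a10) * conv F1 g1 x ≥
        a10 * (1 - a01) * conv F0 g0 x + (1 - a10) * a10 * conv F0 g1 x +
          a10 * a01 * conv F1 g0 x + (1 - a10) ^ 2 * conv F1 g1 x := by
  intro x
  have hdom' : ∀ y, ∫ t in Set.Iic y, g1 t ≤ ∫ t in Set.Iic y, g0 t := by
    intro y
    have := hGdom y
    rw [hG0 y, hG1 y] at this
    exact this
  have hAB : conv F0 g1 x ≤ conv F0 g0 x := by
    rw [hconv, hconv]
    exact conv_dom F0 g0 g1 hF0mono hF0range hg0nn hg1nn hg0int hg1int hg0pdf hg1pdf hdom' x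
  have hCD : conv F1 g1 x ≤ conv F1 g0 x := by
    rw [hconv, hconv]
    exact conv_dom F1 g0 g1 hF1mono hF1range hg0nn hg1nn hg0int hg1int hg0pdf hg1pdf hdom' x
  have hBD : conv F1 g1 x ≤ conv F0 g1 x := by
    rw [hconv, hconv]
    refine integral_mono (hint F1 g1 x (Or.inr rfl) (Or.inr rfl))
      (hint F0 g1 x (Or.inl rfl) (Or.inr rfl)) fun t => ?_
    exact mul_le_mul_of_nonneg_right (hFdom (x - t)) (hg1nn t)
  set A := conv F0 g0 x
  set B := conv F0 g1 x
  set C := conv F1 g0 x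
  set D := conv F1 g1 x
  have hs : (0:ℝ) < 1 - a01 - a10 := by linarith
  have key : (1 - a01) ^ 2 * A + a01 * a10 * B + a01 * (1 - a01) * C + a01 * (1 - a10) * D
      - (a10 * (1 - a01) * A + (1 - a10) * a10 * B + a10 * a01 * C + (1 - a10) ^ 2 * D)
      = (1 - a01 - a10) * ((1 - a01) * (A - B) + a01 * (C - D)
        + (1 - a01 - a10) * (B - D)) := by ring
  have hnn : 0 ≤ (1 - a01) * (A - B) + a01 * (C - D) + (1 - a01 - a10) * (B - D) := by
    have t1 : 0 ≤ (1 - a01) * (A - B) :=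
      mul_nonneg (by linarith [h01.2]) (by linarith)
    have t2 : 0 ≤ a01 * (C - D) := mul_nonneg h01.1.le (by linarith)
    have t3 : 0 ≤ (1 - a01 - a10) * (B - D) := mul_nonneg hs.le (by linarith)
    linarith
  nlinarith [mul_nonneg hs.le hnn]
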